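/- Let P be an abstract polytope of rank d in class 2_I, let j ∈ {0, …, d−1} with j ∉ I, and let i ∈ {1, …, d−1} with i ≠ j−1 and i ≠ j+2. Then for any two pairs F < G and F′ < G′ in P with rank(F) = rank(F′) = i−2 and rank(G) = rank(G′) = i+1, there is an automorphism γ ∈ Γ(P) with γ(F) = F′ and γ(G) = G′; in particular the intervals [F, G] and [F′, G′] are order-isomorphic. -/

import Mathlib

/-! Generic definitions about flags, flag orbits, and abstract polytopes. -/

variable {α : Type*} [PartialOrder α]

/-- Two flags (maximal chains) are in the same orbit of the automorphism group
(the group of order automorphisms) if some order automorphism maps one onto the other. -/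
def SameFlagOrbit (Φ Ψ : Flag α) : Prop :=
  ∃ γ : α ≃o α, γ '' (Φ : Set α) = (Ψ : Set α)

/-- The automorphism group has exactly two orbits on the flags. -/
def TwoFlagOrbits (α : Type*) [PartialOrder α] : Prop :=
  ∃ Φ Ψ : Flag α, ¬ SameFlagOrbit Φ Ψ ∧
    ∀ Ω : Flag α, SameFlagOrbit Ω Φ ∨ SameFlagOrbit Ω Ψ

/-- `Ψ` is the flag `Φ^i`: it differs from `Φ` in exactly the rank-`i` element
(with respect to the rank function `rk`). -/
def IsIAdjacent (rk : α → ℤ) (i : ℤ) (Φ Ψ : Flag α) : Prop :=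
  Φ ≠ Ψ ∧ ∀ x : α, rk x ≠ i → (x ∈ Φ ↔ x ∈ Ψ)

/-- A two-orbit polytope (with rank function `rk`, adjacency indices `0, …, n-1`)
is in class `2_I` if, for every flag `Φ` and every `i < n`, the `i`-adjacent flag `Φ^i`
lies in the same orbit as `Φ` exactly when `i ∈ I`. -/
def InClass (rk : α → ℤ) (n : ℕ) (I : Set ℕ) : Prop :=
  TwoFlagOrbits α ∧
    ∀ (Φ Ψ : Flag α) (i : ℕ), i < n → IsIAdjacent rk i Φ Ψ →
      (SameFlagOrbit Φ Ψ ↔ i ∈ I)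

/-- An abstract polytope of rank `d`: a bounded poset, graded by a rank function `rk`
taking values `-1, 0, …, d`, in which every flag (maximal chain) has exactly one element
of each rank, satisfying the diamond condition and strong flag-connectivity. -/
structure IsAbstractPolytope (α : Type*) [PartialOrder α] [BoundedOrder α]
    (rk : α → ℤ) (d : ℕ) : Prop where
  rk_bot : rk ⊥ = -1
  rk_top : rk ⊤ = d
  rk_strictMono : StrictMono rk
  rk_cover : ∀ x y : α, x ⋖ y → rk y = rk x + 1
  flag_ranks : ∀ (Φ : Flag α) (i : ℤ), -1 ≤ i → i ≤ d → ∃! x, x ∈ Φ ∧ rk x = i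
  diamond : ∀ x y : α, x < y → rk y = rk x + 2 →
    ∃ a b : α, a ≠ b ∧ ∀ z : α, (x < z ∧ z < y) ↔ (z = a ∨ z = b)
  connected : ∀ Φ Ψ : Flag α, ∃ (n : ℕ) (c : Fin (n + 1) → Flag α),
    c 0 = Φ ∧ c (Fin.last n) = Ψ ∧
    (∀ k : Fin n, ∃ i : ℤ, IsIAdjacent rk i (c k.castSucc) (c k.succ)) ∧
    (∀ k, (Φ : Set α) ∩ (Ψ : Set α) ⊆ (c k : Set α))

/-! ### Auxiliary lemmas -/

section Aux

lemma sfo_refl (Φ : Flag α) : SameFlagOrbit Φ Φ :=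
  ⟨OrderIso.refl α, by simp⟩

lemma sfo_symm {Φ Ψ : Flag α} (h : SameFlagOrbit Φ Ψ) : SameFlagOrbit Ψ Φ := by
  obtain ⟨γ, hγ⟩ := h
  refine ⟨γ.symm, ?_⟩
  rw [← hγ, Set.image_image]
  simp

lemma sfo_trans {Φ Ψ Ω : Flag α} (h1 : SameFlagOrbit Φ Ψ) (h2 : SameFlagOrbit Ψ Ω) :
    SameFlagOrbit Φ Ω := by
  obtain ⟨γ, hγ⟩ := h1
  obtain ⟨δ, hδ⟩ := h2
  refine ⟨γ.trans δ, ?_⟩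
  rw [← hδ, ← hγ, ← Set.image_comp]
  rfl

lemma sfo_resolve (h : TwoFlagOrbits α) {Φ Ψ Ω : Flag α}
    (h1 : ¬ SameFlagOrbit Φ Ψ) (h2 : ¬ SameFlagOrbit Ψ Ω) : SameFlagOrbit Φ Ω := by
  obtain ⟨A, B, _, hall⟩ := h
  rcases hall Φ with hΦ | hΦ <;> rcases hall Ψ with hΨ | hΨ <;>
    rcases hall Ω with hΩ | hΩ
  · exact absurd (sfo_trans hΦ (sfo_symm hΨ)) h1
  · exact absurd (sfo_trans hΦ (sfo_symm hΨ)) h1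
  · exact sfo_trans hΦ (sfo_symm hΩ)
  · exact absurd (sfo_trans hΨ (sfo_symm hΩ)) h2
  · exact absurd (sfo_trans hΨ (sfo_symm hΩ)) h2
  · exact sfo_trans hΦ (sfo_symm hΩ)
  · exact absurd (sfo_trans hΦ (sfo_symm hΨ)) h1
  · exact absurd (sfo_trans hΦ (sfo_symm hΨ)) h1

lemma exists_flag_of_chain (s : Set α) (hs : IsChain (· ≤ ·) s) :
    ∃ Φ : Flag α, s ⊆ (Φ : Set α) := by
  obtain ⟨M, hM, hsM⟩ := hs.exists_maxChain
  exact ⟨Flag.ofIsMaxChain M hM, hsM⟩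

variable [BoundedOrder α] {rk : α → ℤ} {d : ℕ}

lemma rk_bounds (hP : IsAbstractPolytope α rk d) (x : α) :
    -1 ≤ rk x ∧ rk x ≤ d := by
  constructor
  · have := hP.rk_strictMono.monotone (bot_le : (⊥ : α) ≤ x)
    rwa [hP.rk_bot] at this
  · have := hP.rk_strictMono.monotone (le_top : x ≤ (⊤ : α))
    rwa [hP.rk_top] at this

lemma lt_of_comp_rk_lt (hP : IsAbstractPolytope α rk d) {x y : α}
    (hc : x ≤ y ∨ y ≤ x) (hr : rk x < rk y) : x < y := by
  rcases hc with h | h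
  · rcases h.lt_or_eq with h' | h'
    · exact h'
    · exact absurd (h' ▸ hr) (lt_irrefl _)
  · rcases h.lt_or_eq with h' | h'
    · exact absurd (hP.rk_strictMono h') (by omega)
    · exact absurd (h' ▸ hr) (lt_irrefl _)

lemma covby_of_rk (hP : IsAbstractPolytope α rk d) {x y : α}
    (hxy : x < y) (h : rk y = rk x + 1) : x ⋖ y := by
  refine ⟨hxy, fun z hz1 hz2 => ?_⟩
  have h1 := hP.rk_strictMono hz1
  have h2 := hP.rk_strictMono hz2
  omega

lemma le_of_comp_rk_le (hP : IsAbstractPolytope α rk d) {x y : α}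
    (hc : x ≤ y ∨ y ≤ x) (hr : rk x ≤ rk y) : x ≤ y := by
  rcases hc with h | h
  · exact h
  · rcases h.lt_or_eq with h' | h'
    · exact absurd (hP.rk_strictMono h') (by omega)
    · exact h'.ge

lemma eq_of_le_rk_ge (hP : IsAbstractPolytope α rk d) {x y : α}
    (h : x ≤ y) (hr : rk y ≤ rk x) : x = y := by
  rcases h.lt_or_eq with h' | h'
  · exact absurd (hP.rk_strictMono h') (by omega)
  · exact h'

/-- Automorphisms preserve the rank. -/
lemma rk_map (hP : IsAbstractPolytope α rk d) (γ : α ≃o α) (x : α) :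
    rk (γ x) = rk x := by
  have hbd := rk_bounds hP
  suffices h : ∀ n : ℕ, ∀ x : α, rk x + 1 = n → rk (γ x) = rk x by
    exact h (rk x + 1).toNat x (by have := (hbd x).1; omega)
  intro n
  induction n with
  | zero =>
    intro x hx
    have hxbot : x = ⊥ := by
      by_contra hne
      have : (⊥ : α) < x := bot_lt_iff_ne_bot.mpr hne
      have := hP.rk_strictMono this
      rw [hP.rk_bot] at this
      omega
    subst hxbot
    rw [map_bot]
  | succ n ih =>
    intro x hx
    obtain ⟨Φ, hΦ⟩ := exists_flag_of_chain {x} (Set.subsingleton_singleton.isChain)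
    have hxΦ : x ∈ Φ := hΦ rfl
    obtain ⟨u, ⟨huΦ, hu⟩, _⟩ := hP.flag_ranks Φ (rk x - 1)
      (by have := (hbd x).1; omega) (by have := (hbd x).2; omega)
    have hux : u < x :=
      lt_of_comp_rk_lt hP (Φ.le_or_le huΦ hxΦ) (by omega)
    have hcov : u ⋖ x := covby_of_rk hP hux (by omega)
    have hcov' : γ u ⋖ γ x := (apply_covBy_apply_iff γ).mpr hcov
    have h1 := hP.rk_cover _ _ hcov'
    have h2 := ih u (by omega)
    omega

/-- Existence of the `j`-adjacent flag, via the diamond condition. -/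
lemma exists_adjacent (hP : IsAbstractPolytope α rk d) (Φ : Flag α) (j : ℕ) (hj : j < d) :
    ∃ Ψ : Flag α, IsIAdjacent rk (j : ℤ) Φ Ψ := by
  have hbd := rk_bounds hP
  obtain ⟨x, ⟨hxΦ, hx⟩, _⟩ := hP.flag_ranks Φ ((j : ℤ) - 1) (by omega) (by omega)
  obtain ⟨y, ⟨hyΦ, hy⟩, _⟩ := hP.flag_ranks Φ ((j : ℤ) + 1) (by omega) (by omega)
  obtain ⟨z, ⟨hzΦ, hz⟩, hzuniq⟩ := hP.flag_ranks Φ (j : ℤ) (by omega) (by omega)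
  have hxy : x < y := lt_of_comp_rk_lt hP (Φ.le_or_le hxΦ hyΦ) (by omega)
  have hxz : x < z := lt_of_comp_rk_lt hP (Φ.le_or_le hxΦ hzΦ) (by omega)
  have hzy : z < y := lt_of_comp_rk_lt hP (Φ.le_or_le hzΦ hyΦ) (by omega)
  obtain ⟨a, b, hab, hmem⟩ := hP.diamond x y hxy (by omega)
  have hzab : z = a ∨ z = b := (hmem z).1 ⟨hxz, hzy⟩
  -- let w be the other middle element
  obtain ⟨w, hwab, hwz⟩ : ∃ w : α, (w = a ∨ w = b) ∧ w ≠ z := by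
    rcases hzab with h | h
    · exact ⟨b, Or.inr rfl, fun hb => hab ((hb.trans h).symm)⟩
    · exact ⟨a, Or.inl rfl, fun ha => hab (ha.trans h)⟩
  have hwmid : x < w ∧ w < y := (hmem w).2 hwab
  have hrkw : rk w = (j : ℤ) := by
    have h1 := hP.rk_strictMono hwmid.1
    have h2 := hP.rk_strictMono hwmid.2
    omega
  -- the new carrier
  set c : Set α := insert w ((Φ : Set α) \ {z}) with hc_def
  have hxc : x ∈ c := Or.inr ⟨hxΦ, by intro h; rw [Set.mem_singleton_iff] at h; subst h; omega⟩
  have hyc : y ∈ c := Or.inr ⟨hyΦ, by intro h; rw [Set.mem_singleton_iff] at h; subst h; omega⟩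
  -- comparability of w with the other elements
  have hcompw : ∀ u ∈ (Φ : Set α), u ≠ z → u < w ∨ w < u := by
    intro u huΦ huz
    have hru : rk u ≠ (j : ℤ) := fun h => huz (hzuniq u ⟨huΦ, h⟩)
    rcases lt_or_gt_of_ne hru with h | h
    · have hux : u ≤ x := le_of_comp_rk_le hP (Φ.le_or_le huΦ hxΦ) (by omega)
      exact Or.inl (lt_of_le_of_lt hux hwmid.1)
    · have hyu : y ≤ u := le_of_comp_rk_le hP ((Φ.le_or_le huΦ hyΦ).symm) (by omega)
      exact Or.inr (lt_of_lt_of_le hwmid.2 hyu)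
  have hchain : IsChain (· ≤ ·) c := by
    intro u hu v hv huv
    rcases hu with hu | hu <;> rcases hv with hv | hv
    · exact absurd (hu.trans hv.symm) huv
    · subst hu
      rcases hcompw v hv.1 (fun h => hv.2 (Set.mem_singleton_iff.mpr h)) with h | h
      · exact Or.inr h.le
      · exact Or.inl h.le
    · subst hv
      rcases hcompw u hu.1 (fun h => hu.2 (Set.mem_singleton_iff.mpr h)) with h | h
      · exact Or.inl h.le
      · exact Or.inr h.le
    · exact Φ.chain_le hu.1 hv.1 huv
  have hmax : ∀ ⦃s : Set α⦄, IsChain (· ≤ ·) s → c ⊆ s → c = s := by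
    intro s hs hcs
    refine Set.Subset.antisymm hcs fun v hv => ?_
    have hcompv : ∀ u ∈ c, u ≤ v ∨ v ≤ u := fun u hu =>
      (hs.total (hcs hu) hv).imp id id
    by_cases hrv : rk v = (j : ℤ)
    · -- v is between x and y, hence v = z or v = w; comparability with w rules out z
      have hxv : x < v := lt_of_comp_rk_lt hP (hcompv x hxc) (by omega)
      have hvy : v < y := lt_of_comp_rk_lt hP ((hcompv y hyc).symm) (by omega)
      have hvab : v = a ∨ v = b := (hmem v).1 ⟨hxv, hvy⟩
      have hvzw : v = z ∨ v = w := by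
        rcases hvab with h | h <;> rcases hzab with h' | h' <;> rcases hwab with h'' | h''
        · exact Or.inl (h.trans h'.symm)
        · exact Or.inl (h.trans h'.symm)
        · exact Or.inr (h.trans h''.symm)
        · exact (hwz (h''.trans h'.symm)).elim
        · exact (hwz (h''.trans h'.symm)).elim
        · exact Or.inr (h.trans h''.symm)
        · exact Or.inl (h.trans h'.symm)
        · exact Or.inl (h.trans h'.symm)
      rcases hvzw with h | h
      · -- v = z: but z is incomparable with w
        subst h
        rcases hcompv w (Or.inl rfl) with h' | h'
        · exact absurd (eq_of_le_rk_ge hP h' (by omega)) hwz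
        · exact absurd (eq_of_le_rk_ge hP h' (by omega)).symm hwz
      · exact h ▸ Or.inl rfl
    · -- v has rank ≠ j, hence v is comparable with all of Φ, so v ∈ Φ
      have hvz : v ≤ z ∨ z ≤ v := by
        rcases lt_or_gt_of_ne hrv with h | h
        · have hvx : v ≤ x := le_of_comp_rk_le hP ((hcompv x hxc).symm) (by omega)
          exact Or.inl (hvx.trans hxz.le)
        · have hyv : y ≤ v := le_of_comp_rk_le hP (hcompv y hyc) (by omega)
          exact Or.inr (hzy.le.trans hyv)
      have hch : IsChain (· ≤ ·) (insert v (Φ : Set α)) := by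
        refine Φ.chain_le.insert fun u huΦ hvu => ?_
        by_cases huz : u = z
        · subst huz; exact hvz
        · rcases hcompv u (Or.inr ⟨huΦ, huz⟩) with h' | h'
          · exact Or.inr h'
          · exact Or.inl h'
      have hΦins := Φ.max_chain' hch (Set.subset_insert _ _)
      have hvΦ : v ∈ (Φ : Set α) := by
        show v ∈ Φ.carrier
        rw [hΦins]
        exact Set.mem_insert _ _
      exact Or.inr ⟨hvΦ, fun h => hrv (by rw [Set.mem_singleton_iff] at h; rw [h, hz])⟩
  refine ⟨Flag.ofIsMaxChain c ⟨hchain, hmax⟩, ?_, ?_⟩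
  · -- Φ ≠ Ψ since z ∈ Φ but z ∉ c
    intro h
    have hzc : z ∈ c := by
      rw [← Flag.coe_ofIsMaxChain c ⟨hchain, hmax⟩, ← h]
      exact hzΦ
    rcases hzc with h' | h'
    · exact hwz h'.symm
    · exact h'.2 rfl
  · intro u hu
    constructor
    · intro huΦ
      exact Or.inr ⟨huΦ, fun h => hu (by rw [Set.mem_singleton_iff] at h; rw [h, hz])⟩
    · intro huc
      rcases huc with h | h
      · exact absurd (h ▸ hrkw) hu
      · exact h.1

end Aux

/-- If `P` is an abstract polytope of rank `d` in class `2_I`,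
`j ∈ {0, …, d-1}` with `j ∉ I`, and `i ∈ {1, …, d-1}` with `i ≠ j - 1` and `i ≠ j + 2`,
then `Γ(P)` acts transitively on pairs `F < G` of incident faces of ranks `i - 2` and
`i + 1`; in particular, all the sections `G/F` are order-isomorphic. -/
theorem transitive_on_sections {α : Type*} [PartialOrder α] [BoundedOrder α]
    (rk : α → ℤ) (d : ℕ) (hP : IsAbstractPolytope α rk d)
    (I : Set ℕ) (h2 : InClass rk d I)
    (j : ℕ) (hj : j < d) (hjI : j ∉ I)
    (i : ℕ) (hi1 : 1 ≤ i) (hi2 : i ≤ d - 1)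
    (hij1 : (i : ℤ) ≠ (j : ℤ) - 1) (hij2 : (i : ℤ) ≠ (j : ℤ) + 2)
    (F G F' G' : α) (hFG : F < G) (hFG' : F' < G')
    (hF : rk F = (i : ℤ) - 2) (hG : rk G = (i : ℤ) + 1)
    (hF' : rk F' = (i : ℤ) - 2) (hG' : rk G' = (i : ℤ) + 1) :
    (∃ γ : α ≃o α, γ F = F' ∧ γ G = G') ∧
      Nonempty (↥(Set.Icc F G) ≃o ↥(Set.Icc F' G')) := by
  have hbd := rk_bounds hP
  have hid : 2 ≤ d ∧ (i : ℤ) + 1 ≤ (d : ℤ) := by omega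
  -- extend the two pairs to flags
  obtain ⟨Φ, hΦ⟩ := exists_flag_of_chain {F, G} (IsChain.pair hFG.le)
  obtain ⟨Ψ, hΨ⟩ := exists_flag_of_chain {F', G'} (IsChain.pair hFG'.le)
  have hFΦ : F ∈ Φ := hΦ (Set.mem_insert _ _)
  have hGΦ : G ∈ Φ := hΦ (Set.mem_insert_of_mem _ rfl)
  have hF'Ψ : F' ∈ Ψ := hΨ (Set.mem_insert _ _)
  have hG'Ψ : G' ∈ Ψ := hΨ (Set.mem_insert_of_mem _ rfl)
  -- find a flag Ω containing F', G' in the same orbit as Φ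
  have key : ∃ Ω : Flag α, F' ∈ Ω ∧ G' ∈ Ω ∧ SameFlagOrbit Φ Ω := by
    by_cases h : SameFlagOrbit Φ Ψ
    · exact ⟨Ψ, hF'Ψ, hG'Ψ, h⟩
    · obtain ⟨Ψ', hadj⟩ := exists_adjacent hP Ψ j hj
      have hΨΨ' : ¬ SameFlagOrbit Ψ Ψ' := fun hs =>
        hjI ((h2.2 Ψ Ψ' j hj hadj).1 hs)
      refine ⟨Ψ', ?_, ?_, sfo_resolve h2.1 h hΨΨ'⟩
      · exact (hadj.2 F' (by rw [hF']; omega)).1 hF'Ψ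
      · exact (hadj.2 G' (by rw [hG']; omega)).1 hG'Ψ
  obtain ⟨Ω, hF'Ω, hG'Ω, γ, hγ⟩ := key
  have hrkγ := rk_map hP γ
  have hγF : γ F = F' := by
    have hmem : γ F ∈ Ω := by
      rw [← Flag.mem_coe_iff, ← hγ]
      exact ⟨F, hFΦ, rfl⟩
    obtain ⟨u, _, huniq⟩ := hP.flag_ranks Ω ((i : ℤ) - 2) (by omega) (by omega)
    have e1 := huniq (γ F) ⟨hmem, by rw [hrkγ, hF]⟩
    have e2 := huniq F' ⟨hF'Ω, hF'⟩
    rw [e1, e2]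
  have hγG : γ G = G' := by
    have hmem : γ G ∈ Ω := by
      rw [← Flag.mem_coe_iff, ← hγ]
      exact ⟨G, hGΦ, rfl⟩
    obtain ⟨u, _, huniq⟩ := hP.flag_ranks Ω ((i : ℤ) + 1) (by omega) (by omega)
    have e1 := huniq (γ G) ⟨hmem, by rw [hrkγ, hG]⟩
    have e2 := huniq G' ⟨hG'Ω, hG'⟩
    rw [e1, e2]
  refine ⟨⟨γ, hγF, hγG⟩, ⟨?_⟩⟩
  exact
    { toFun := fun x => ⟨γ x, by
        rw [Set.mem_Icc, ← hγF, ← hγG]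
        exact ⟨γ.monotone x.2.1, γ.monotone x.2.2⟩⟩
      invFun := fun y => ⟨γ.symm y, by
        have h1 : γ.symm F' = F := by rw [← hγF]; exact γ.symm_apply_apply F
        have h2 : γ.symm G' = G := by rw [← hγG]; exact γ.symm_apply_apply G
        rw [Set.mem_Icc, ← h1, ← h2]
        exact ⟨γ.symm.monotone y.2.1, γ.symm.monotone y.2.2⟩⟩
      left_inv := fun x => Subtype.ext (γ.symm_apply_apply x)
      right_inv := fun y => Subtype.ext (γ.apply_symm_apply y)
      map_rel_iff' := by
        intro x y
        exact γ.le_iff_le }
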